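/- Under the stereographic projection n ↦ z = (n₁ - i n₂)/(1 - n₃) from S² \ {(0,0,1)} to ℂ, the map w(r) = ((1-ε²)r + 2ε(1 + ε(n·r))n)/(1 + ε² + 2ε(n·r)) on S² corresponds to the Möbius transformation z ↦ (az + b)/(cz + d) with a = 1 + ε n₃, b = ε(n₁ - i n₂), c = ε(n₁ + i n₂), d = 1 - ε n₃. -/

import Mathlib

open Matrix

noncomputable section

/-- Pauli matrix σ₁. -/
def pauli1 : Matrix (Fin 2) (Fin 2) ℂ := !![0, 1; 1, 0]
/-- Pauli matrix σ₂. -/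
def pauli2 : Matrix (Fin 2) (Fin 2) ℂ := !![0, -Complex.I; Complex.I, 0]
/-- Pauli matrix σ₃. -/
def pauli3 : Matrix (Fin 2) (Fin 2) ℂ := !![1, 0; 0, -1]

/-- σ(v) = v₁σ₁ + v₂σ₂ + v₃σ₃ for v ∈ ℝ³. -/
def pauliVec (v : Fin 3 → ℝ) : Matrix (Fin 2) (Fin 2) ℂ :=
  (v 0 : ℂ) • pauli1 + (v 1 : ℂ) • pauli2 + (v 2 : ℂ) • pauli3

/-- Euclidean dot product on ℝ³. -/
def dot3 (a b : Fin 3 → ℝ) : ℝ := a 0 * b 0 + a 1 * b 1 + a 2 * b 2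

/-- v is a unit vector of ℝ³. -/
def IsUnitVec (v : Fin 3 → ℝ) : Prop := dot3 v v = 1

/-- P(n,ε) = (I + ε σ(n))/2. -/
def Pmat (n : Fin 3 → ℝ) (ε : ℝ) : Matrix (Fin 2) (Fin 2) ℂ :=
  ((1 : ℂ)/2) • (1 + (ε : ℂ) • pauliVec n)

/-- λ(ε,n,r) = (1 + ε² + 2ε(n·r))/4. -/
def lam (ε : ℝ) (n r : Fin 3 → ℝ) : ℝ := (1 + ε^2 + 2*ε*(dot3 n r))/4

/-- The map w(r) = ((1-ε²)r + 2ε(1+ε(n·r))n)/(1+ε²+2ε(n·r)). -/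
def wmap (ε : ℝ) (n r : Fin 3 → ℝ) : Fin 3 → ℝ :=
  fun i => ((1 - ε^2) * r i + 2*ε*(1 + ε*(dot3 n r)) * n i) / (1 + ε^2 + 2*ε*(dot3 n r))

/-- Stereographic projection n ↦ (n₁ - i n₂)/(1 - n₃). -/
def stereo (v : Fin 3 → ℝ) : ℂ := ((v 0 : ℂ) - Complex.I * (v 1 : ℂ)) / (1 - (v 2 : ℂ))

/-- under stereographic projection w becomes the Möbius map
z ↦ (az+b)/(cz+d) with a = 1+εn₃, b = ε(n₁-in₂), c = ε(n₁+in₂), d = 1-εn₃. -/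
theorem stmt14 (n : Fin 3 → ℝ) (hn : IsUnitVec n) (ε : ℝ) (hε : ε ∈ Set.Ioo (0:ℝ) 1)
    (r : Fin 3 → ℝ) (hr : IsUnitVec r) (hr3 : r 2 ≠ 1) (hw3 : wmap ε n r 2 ≠ 1) :
    stereo (wmap ε n r) =
      ((1 + (ε:ℂ) * (n 2)) * stereo r + (ε:ℂ) * ((n 0 : ℂ) - Complex.I * (n 1))) /
      ((ε:ℂ) * ((n 0 : ℂ) + Complex.I * (n 1)) * stereo r + (1 - (ε:ℂ) * (n 2))) := by
  obtain ⟨hε0, hε1⟩ := hε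
  have hnn : n 0 ^ 2 + n 1 ^ 2 + n 2 ^ 2 = 1 := by
    have := hn; simp only [IsUnitVec, dot3] at this; nlinarith [this]
  have hrr : r 0 ^ 2 + r 1 ^ 2 + r 2 ^ 2 = 1 := by
    have := hr; simp only [IsUnitVec, dot3] at this; nlinarith [this]
  have ht : -1 ≤ dot3 n r := by
    simp only [dot3]
    nlinarith [sq_nonneg (n 0 + r 0), sq_nonneg (n 1 + r 1), sq_nonneg (n 2 + r 2)]
  have hD : (0:ℝ) < 1 + ε^2 + 2*ε*(dot3 n r) := by nlinarith [sq_nonneg (1-ε)]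
  have hM : (1 - ε^2) * r 2 + 2*ε*(1 + ε*(dot3 n r)) * n 2 ≠ 1 + ε^2 + 2*ε*(dot3 n r) := by
    intro h
    apply hw3
    simp only [wmap, h]
    field_simp
    exact div_self (ne_of_gt (by nlinarith))
  set t : ℝ := dot3 n r with htdef
  have htc : (t : ℂ) = (n 0 : ℂ) * (r 0 : ℂ) + (n 1 : ℂ) * (r 1 : ℂ) + (n 2 : ℂ) * (r 2 : ℂ) := by
    simp only [htdef, dot3]; push_cast; ring
  have hDc : (1:ℂ) + (ε:ℂ)^2 + 2*(ε:ℂ)*(t:ℂ) ≠ 0 := by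
    intro h
    have h2 : ((1 + ε^2 + 2*ε*t : ℝ) : ℂ) = 0 := by push_cast; linear_combination h
    rw [Complex.ofReal_eq_zero] at h2
    linarith
  have hMc : (1:ℂ) + (ε:ℂ)^2 + 2*(ε:ℂ)*(t:ℂ) - ((1 - (ε:ℂ)^2) * (r 2 : ℂ) + 2*(ε:ℂ)*(1 + (ε:ℂ)*(t:ℂ)) * (n 2 : ℂ)) ≠ 0 := by
    intro h
    have h2 : ((1 + ε^2 + 2*ε*t - ((1 - ε^2) * r 2 + 2*ε*(1 + ε*t) * n 2) : ℝ) : ℂ) = 0 := by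
      push_cast; linear_combination h
    rw [Complex.ofReal_eq_zero] at h2
    exact hM (by linarith)
  have hr3c : (1:ℂ) - (r 2 : ℂ) ≠ 0 := by
    intro h
    apply hr3
    have : (r 2 : ℂ) = 1 := by linear_combination -h
    exact_mod_cast this
  have hnC : (n 0 : ℂ)^2 + (n 1 : ℂ)^2 + (n 2 : ℂ)^2 = 1 := by exact_mod_cast hnn
  have hrC : (r 0 : ℂ)^2 + (r 1 : ℂ)^2 + (r 2 : ℂ)^2 = 1 := by exact_mod_cast hrr
  set E : ℂ := (ε:ℂ) * ((n 0 : ℂ) + Complex.I * (n 1 : ℂ)) * ((r 0 : ℂ) - Complex.I * (r 1 : ℂ))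
      + (1 - (ε:ℂ) * (n 2 : ℂ)) * (1 - (r 2 : ℂ)) with hEdef
  have hEE : E * ((ε:ℂ) * ((n 0 : ℂ) - Complex.I * (n 1 : ℂ)) * ((r 0 : ℂ) + Complex.I * (r 1 : ℂ))
      + (1 - (ε:ℂ) * (n 2 : ℂ)) * (1 - (r 2 : ℂ)))
      = (1 - (r 2 : ℂ)) * ((1:ℂ) + (ε:ℂ)^2 + 2*(ε:ℂ)*(t:ℂ) - ((1 - (ε:ℂ)^2) * (r 2 : ℂ) + 2*(ε:ℂ)*(1 + (ε:ℂ)*(t:ℂ)) * (n 2 : ℂ))) := by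
    rw [hEdef, htc]
    linear_combination ((1)*(ε:ℂ)^2 + (-1)*(ε:ℂ)^2*(r 2:ℂ)^2) * hnC + ((1)*(ε:ℂ)^2*(n 1:ℂ)^2 + (1)*(ε:ℂ)^2*(n 0:ℂ)^2) * hrC + ((-2)*(ε:ℂ)*(n 1:ℂ)*(r 1:ℂ) + (2)*(ε:ℂ)*(n 1:ℂ)*(r 1:ℂ)*(r 2:ℂ) + (2)*(ε:ℂ)^2*(n 1:ℂ)*(n 2:ℂ)*(r 1:ℂ) + (-2)*(ε:ℂ)^2*(n 1:ℂ)*(n 2:ℂ)*(r 1:ℂ)*(r 2:ℂ) + (-1)*(ε:ℂ)^2*(n 1:ℂ)^2*(r 1:ℂ)^2 + (1)*(ε:ℂ)^2*(n 1:ℂ)^2*(r 1:ℂ)^2*Complex.I^2 + (-1)*(ε:ℂ)^2*(n 1:ℂ)^2*(r 0:ℂ)^2 + (-1)*(ε:ℂ)^2*(n 0:ℂ)^2*(r 1:ℂ)^2) * Complex.I_sq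
  have hEne : E ≠ 0 := by
    intro h
    rw [h, zero_mul] at hEE
    exact (mul_ne_zero hr3c hMc) hEE.symm
  have hY : (1:ℂ) - ((1 - (ε:ℂ)^2) * (r 2 : ℂ) + 2*(ε:ℂ)*(1 + (ε:ℂ)*(t:ℂ)) * (n 2 : ℂ)) / ((1:ℂ) + (ε:ℂ)^2 + 2*(ε:ℂ)*(t:ℂ)) ≠ 0 := by
    rw [sub_ne_zero]
    intro h
    apply hMc
    rw [eq_div_iff hDc] at h
    linear_combination h
  have hL : stereo (wmap ε n r) =
      ((1 - (ε:ℂ)^2) * (r 0 : ℂ) + 2*(ε:ℂ)*(1 + (ε:ℂ)*(t:ℂ)) * (n 0 : ℂ)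
        - Complex.I * ((1 - (ε:ℂ)^2) * (r 1 : ℂ) + 2*(ε:ℂ)*(1 + (ε:ℂ)*(t:ℂ)) * (n 1 : ℂ)))
      / ((1:ℂ) + (ε:ℂ)^2 + 2*(ε:ℂ)*(t:ℂ) - ((1 - (ε:ℂ)^2) * (r 2 : ℂ) + 2*(ε:ℂ)*(1 + (ε:ℂ)*(t:ℂ)) * (n 2 : ℂ))) := by
    simp only [stereo, wmap, ← htdef]
    push_cast
    rw [div_eq_div_iff hY hMc]
    field_simp
    have hD' : (1:ℂ) + (ε:ℂ)^2 + (ε:ℂ)*2*(t:ℂ) ≠ 0 := by rw [mul_comm (ε:ℂ) 2]; exact hDc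
    rw [mul_div_assoc, one_sub_div hD']
  have hz : stereo r = ((r 0 : ℂ) - Complex.I * (r 1 : ℂ)) / (1 - (r 2 : ℂ)) := rfl
  have hden : (ε:ℂ) * ((n 0 : ℂ) + Complex.I * (n 1 : ℂ)) * (((r 0 : ℂ) - Complex.I * (r 1 : ℂ)) / (1 - (r 2 : ℂ))) + (1 - (ε:ℂ) * (n 2 : ℂ)) = E / (1 - (r 2 : ℂ)) := by
    rw [hEdef]; field_simp
  have hnum : (1 + (ε:ℂ) * (n 2 : ℂ)) * (((r 0 : ℂ) - Complex.I * (r 1 : ℂ)) / (1 - (r 2 : ℂ))) + (ε:ℂ) * ((n 0 : ℂ) - Complex.I * (n 1 : ℂ))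
      = ((1 + (ε:ℂ) * (n 2 : ℂ)) * ((r 0 : ℂ) - Complex.I * (r 1 : ℂ)) + (ε:ℂ) * ((n 0 : ℂ) - Complex.I * (n 1 : ℂ)) * (1 - (r 2 : ℂ))) / (1 - (r 2 : ℂ)) := by
    field_simp
  rw [hL, hz, hden, hnum, div_div_div_cancel_right₀ hr3c]
  rw [div_eq_div_iff hMc hEne, htc, hEdef]
  linear_combination ((-2)*(ε:ℂ)^2*(r 1:ℂ)*Complex.I + (2)*(ε:ℂ)^2*(r 0:ℂ) + (-2)*(ε:ℂ)^3*(n 2:ℂ)*(r 1:ℂ)*(r 2:ℂ)*Complex.I + (2)*(ε:ℂ)^3*(n 2:ℂ)*(r 0:ℂ)*(r 2:ℂ) + (-2)*(ε:ℂ)^3*(n 1:ℂ)*(r 1:ℂ)^2*Complex.I + (2)*(ε:ℂ)^3*(n 1:ℂ)*(r 0:ℂ)*(r 1:ℂ) + (-2)*(ε:ℂ)^3*(n 0:ℂ)*(r 0:ℂ)*(r 1:ℂ)*Complex.I + (2)*(ε:ℂ)^3*(n 0:ℂ)*(r 0:ℂ)^2) * hnC + ((1)*(ε:ℂ)*(n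 1:ℂ)*Complex.I + (-1)*(ε:ℂ)*(n 0:ℂ) + (-1)*(ε:ℂ)^3*(n 1:ℂ)*Complex.I + (1)*(ε:ℂ)^3*(n 0:ℂ)) * hrC + ((1)*(ε:ℂ)*(n 1:ℂ)*(r 1:ℂ)^2*Complex.I + (-2)*(ε:ℂ)*(n 1:ℂ)*(r 0:ℂ)*(r 1:ℂ) + (1)*(ε:ℂ)*(n 0:ℂ)*(r 1:ℂ)^2 + (2)*(ε:ℂ)^2*(n 1:ℂ)^2*(r 1:ℂ)*Complex.I + (-2)*(ε:ℂ)^2*(n 1:ℂ)^2*(r 0:ℂ) + (-1)*(ε:ℂ)^3*(n 1:ℂ)*(r 1:ℂ)^2*Complex.I + (2)*(ε:ℂ)^3*(n 1:ℂ)*(r 0:ℂ)*(r 1:ℂ) + (2)*(ε:ℂ)^3*(n 1:ℂ)^2*(n 2:ℂ)*(r 1:ℂ)*(r 2:ℂ)*Complex.I + (-2)*(ε:ℂ)^3*(n 1:ℂ)^2*(n 2:ℂ)*(r 0:ℂ)*(r 2:ℂ) + (2)*(ε:ℂ)^3*(n 1:ℂ)^3*(r 1:ℂ)^2*Complex.I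 + (-2)*(ε:ℂ)^3*(n 1:ℂ)^3*(r 0:ℂ)*(r 1:ℂ) + (-1)*(ε:ℂ)^3*(n 0:ℂ)*(r 1:ℂ)^2 + (2)*(ε:ℂ)^3*(n 0:ℂ)*(n 1:ℂ)^2*(r 0:ℂ)*(r 1:ℂ)*Complex.I + (-2)*(ε:ℂ)^3*(n 0:ℂ)*(n 1:ℂ)^2*(r 0:ℂ)^2) * Complex.I_sq
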